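/- The map ν ↦ ∫_0^T { Q^ν_t f(t) − η ν_t^2 − 2a Q^ν_t ν_t − φ (Q^ν_t)^2 } dt, where Q^ν_t = ∫_0^t ν_u du, is strictly concave on L^2([0,T]): for ζ ≠ ν in L^2 (differing on a set of positive measure) and ρ ∈ (0,1), H(ρζ + (1−ρ)ν) > ρ H(ζ) + (1−ρ) H(ν). -/

import Mathlib

open MeasureTheory intervalIntegral


theorem mulII {T : ℝ} {g h : ℝ → ℝ} (hg : IntervalIntegrable g volume 0 T)
    (hh : IntervalIntegrable h volume 0 T)
    (hg2 : IntervalIntegrable (fun t => g t ^ 2) volume 0 T)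
    (hh2 : IntervalIntegrable (fun t => h t ^ 2) volume 0 T) :
    IntervalIntegrable (fun t => g t * h t) volume 0 T := by
  rw [intervalIntegrable_iff] at hg hh hg2 hh2 ⊢
  refine Integrable.mono' (hg2.add hh2) (hg.aestronglyMeasurable.mul hh.aestronglyMeasurable) ?_
  filter_upwards with t
  have h1 : 2 * |g t| * |h t| ≤ |g t| ^ 2 + |h t| ^ 2 := two_mul_le_add_sq _ _
  have h2 : (0:ℝ) ≤ |g t| := abs_nonneg _
  have h3 : (0:ℝ) ≤ |h t| := abs_nonneg _
  simp only [Real.norm_eq_abs, abs_mul, Pi.add_apply]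
  nlinarith [sq_abs (g t), sq_abs (h t)]

theorem integrandII {T η a φ : ℝ} {f g : ℝ → ℝ} (hf : IntervalIntegrable f volume 0 T)
    (hg : IntervalIntegrable g volume 0 T)
    (hg2 : IntervalIntegrable (fun t => g t ^ 2) volume 0 T) :
    IntervalIntegrable (fun t => (∫ u in (0:ℝ)..t, g u) * f t - η * g t ^ 2
      - 2 * a * (∫ u in (0:ℝ)..t, g u) * g t - φ * (∫ u in (0:ℝ)..t, g u) ^ 2) volume 0 T := by
  have hQ : ContinuousOn (fun t => ∫ u in (0:ℝ)..t, g u) (Set.uIcc 0 T) :=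
    continuousOn_primitive_interval' hg Set.left_mem_uIcc
  have h1 : IntervalIntegrable (fun t => (∫ u in (0:ℝ)..t, g u) * f t) volume 0 T :=
    hf.continuousOn_mul hQ
  have h2 : IntervalIntegrable (fun t => η * g t ^ 2) volume 0 T := hg2.const_mul η
  have h3 : IntervalIntegrable (fun t => 2 * a * (∫ u in (0:ℝ)..t, g u) * g t) volume 0 T := by
    have := (hg.continuousOn_mul hQ).const_mul (2 * a)
    simpa [mul_assoc] using this
  have h4 : IntervalIntegrable (fun t => φ * (∫ u in (0:ℝ)..t, g u) ^ 2) volume 0 T := by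
    have : ContinuousOn (fun t => φ * (∫ u in (0:ℝ)..t, g u) ^ 2) (Set.uIcc 0 T) :=
      (continuousOn_const.mul (hQ.pow 2))
    exact this.intervalIntegrable
  exact ((h1.sub h2).sub h3).sub h4


theorem selfconv {T : ℝ} (hT : 0 ≤ T) {δ : ℝ → ℝ} (hδ : IntervalIntegrable δ volume 0 T) :
    ∫ t in (0:ℝ)..T, (∫ u in (0:ℝ)..t, δ u) * δ t
      = (∫ u in (0:ℝ)..T, δ u) ^ 2 / 2 := by
  set μ := volume.restrict (Set.Ioc (0:ℝ) T) with hμ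
  have hδμ : Integrable δ μ := by
    rwa [intervalIntegrable_iff_integrableOn_Ioc_of_le hT] at hδ
  have hG : Integrable (fun p : ℝ × ℝ => δ p.1 * δ p.2) (μ.prod μ) := hδμ.mul_prod hδμ
  have hS : MeasurableSet {p : ℝ × ℝ | p.2 ≤ p.1} :=
    (isClosed_le continuous_snd continuous_fst).measurableSet
  have hS' : MeasurableSet {p : ℝ × ℝ | p.1 ≤ p.2} :=
    (isClosed_le continuous_fst continuous_snd).measurableSet
  have hF : Integrable ({p : ℝ × ℝ | p.2 ≤ p.1}.indicator fun p => δ p.1 * δ p.2) (μ.prod μ) :=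
    hG.indicator hS
  have hF' : Integrable ({p : ℝ × ℝ | p.1 ≤ p.2}.indicator fun p => δ p.1 * δ p.2) (μ.prod μ) :=
    hG.indicator hS'
  -- inner integral identity
  have inner : ∀ t ∈ Set.Ioc (0:ℝ) T,
      (∫ u in (0:ℝ)..t, δ u) * δ t
        = ∫ u, ({p : ℝ × ℝ | p.2 ≤ p.1}.indicator fun p => δ p.1 * δ p.2) (t, u) ∂μ := by
    intro t ht
    have h1 : (∫ u in (0:ℝ)..t, δ u) = ∫ u, (Set.Iic t).indicator δ u ∂μ := by
      rw [intervalIntegral.integral_of_le ht.1.le, hμ,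
        setIntegral_indicator measurableSet_Iic, Set.Ioc_inter_Iic, min_eq_right ht.2]
    rw [h1, ← MeasureTheory.integral_mul_const]
    congr 1
    funext u
    by_cases hu : u ≤ t
    · simp [Set.indicator_of_mem, hu, Set.indicator_apply, mul_comm]
    · simp [Set.indicator_apply, hu]
  -- first Fubini computation
  have e1 : ∫ p, ({p : ℝ × ℝ | p.2 ≤ p.1}.indicator fun p => δ p.1 * δ p.2) p ∂(μ.prod μ)
      = ∫ t in (0:ℝ)..T, (∫ u in (0:ℝ)..t, δ u) * δ t := by
    rw [MeasureTheory.integral_prod _ hF, intervalIntegral.integral_of_le hT]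
    exact (setIntegral_congr_fun measurableSet_Ioc fun t ht => (inner t ht).symm)
  -- second: other triangle
  have inner' : ∀ t ∈ Set.Ioc (0:ℝ) T,
      (∫ u in (0:ℝ)..t, δ u) * δ t
        = ∫ u, ({p : ℝ × ℝ | p.1 ≤ p.2}.indicator fun p => δ p.1 * δ p.2) (u, t) ∂μ := by
    intro t ht
    have h1 : (∫ u in (0:ℝ)..t, δ u) = ∫ u, (Set.Iic t).indicator δ u ∂μ := by
      rw [intervalIntegral.integral_of_le ht.1.le, hμ,
        setIntegral_indicator measurableSet_Iic, Set.Ioc_inter_Iic, min_eq_right ht.2]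
    rw [h1, ← MeasureTheory.integral_mul_const]
    congr 1
    funext u
    by_cases hu : u ≤ t
    · simp [Set.indicator_apply, hu]
    · simp [Set.indicator_apply, hu]
  have e2 : ∫ p, ({p : ℝ × ℝ | p.1 ≤ p.2}.indicator fun p => δ p.1 * δ p.2) p ∂(μ.prod μ)
      = ∫ t in (0:ℝ)..T, (∫ u in (0:ℝ)..t, δ u) * δ t := by
    rw [MeasureTheory.integral_prod_symm _ hF', intervalIntegral.integral_of_le hT]
    exact (setIntegral_congr_fun measurableSet_Ioc fun t ht => (inner' t ht).symm)
  -- diagonal is null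
  have hdiag : (μ.prod μ) ({p : ℝ × ℝ | p.2 ≤ p.1} ∩ {p : ℝ × ℝ | p.1 ≤ p.2}) = 0 := by
    have hsub : ({p : ℝ × ℝ | p.2 ≤ p.1} ∩ {p : ℝ × ℝ | p.1 ≤ p.2})
        = {p : ℝ × ℝ | p.1 = p.2} := by
      ext p; simp only [Set.mem_inter_iff, Set.mem_setOf_eq]
      constructor
      · rintro ⟨h1, h2⟩; exact le_antisymm h2 h1
      · rintro h; exact ⟨h.ge, h.le⟩
    rw [hsub]
    have hmeas : MeasurableSet {p : ℝ × ℝ | p.1 = p.2} :=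
      (isClosed_eq continuous_fst continuous_snd).measurableSet
    rw [Measure.prod_apply hmeas]
    have : ∀ x : ℝ, μ (Prod.mk x ⁻¹' {p : ℝ × ℝ | p.1 = p.2}) = 0 := by
      intro x
      have : Prod.mk x ⁻¹' {p : ℝ × ℝ | p.1 = p.2} = {x} := by
        ext y; simp [eq_comm]
      rw [this, hμ, Measure.restrict_apply (measurableSet_singleton x)]
      exact measure_mono_null Set.inter_subset_left (measure_singleton x)
    simp only [this, lintegral_zero]
  -- sum identity
  have hsum : (fun p : ℝ × ℝ => ({p : ℝ × ℝ | p.2 ≤ p.1}.indicator fun p => δ p.1 * δ p.2) p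
        + ({p : ℝ × ℝ | p.1 ≤ p.2}.indicator fun p => δ p.1 * δ p.2) p)
      = fun p : ℝ × ℝ => δ p.1 * δ p.2
        + (({p : ℝ × ℝ | p.2 ≤ p.1} ∩ {p : ℝ × ℝ | p.1 ≤ p.2}).indicator
            fun p => δ p.1 * δ p.2) p := by
    funext p
    by_cases h1 : p.2 ≤ p.1 <;> by_cases h2 : p.1 ≤ p.2 <;>
      simp [Set.indicator_apply, h1, h2] <;> linarith
  have hzero : ∫ p, (({p : ℝ × ℝ | p.2 ≤ p.1} ∩ {p : ℝ × ℝ | p.1 ≤ p.2}).indicator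
      fun p => δ p.1 * δ p.2) p ∂(μ.prod μ) = 0 := by
    rw [MeasureTheory.integral_indicator (hS.inter hS'), Measure.restrict_eq_zero.mpr hdiag,
      integral_zero_measure]
  have htot : ∫ p, ({p : ℝ × ℝ | p.2 ≤ p.1}.indicator fun p => δ p.1 * δ p.2) p ∂(μ.prod μ)
      + ∫ p, ({p : ℝ × ℝ | p.1 ≤ p.2}.indicator fun p => δ p.1 * δ p.2) p ∂(μ.prod μ)
      = (∫ u in (0:ℝ)..T, δ u) ^ 2 := by
    rw [← integral_add hF hF', hsum, integral_add hG (hG.indicator (hS.inter hS')), hzero,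
      add_zero, integral_prod_mul, intervalIntegral.integral_of_le hT]
    ring
  rw [e1, e2] at htot
  linarith

/-- Strict concavity of the informed trader's (pathwise) objective
`H(ν) = ∫_0^T { Q^ν_t f(t) − η ν_t² − 2a Q^ν_t ν_t − φ (Q^ν_t)² } dt`
on L²([0,T]): for ζ, ν differing on a set of positive measure and ρ ∈ (0,1),
`H(ρζ + (1−ρ)ν) > ρ H(ζ) + (1−ρ) H(ν)`. -/
theorem stmt_1 (T η a φ : ℝ) (hT : 0 < T) (hη : 0 < η) (ha : 0 < a) (hφ : 0 < φ)
    (f : ℝ → ℝ) (hf : IntervalIntegrable f volume 0 T)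
    (H : (ℝ → ℝ) → ℝ)
    (hH : ∀ v : ℝ → ℝ, H v =
      ∫ t in (0:ℝ)..T,
        ((∫ u in (0:ℝ)..t, v u) * f t - η * (v t) ^ 2
          - 2 * a * (∫ u in (0:ℝ)..t, v u) * v t
          - φ * (∫ u in (0:ℝ)..t, v u) ^ 2))
    (ζ ν : ℝ → ℝ)
    (hζ : IntervalIntegrable ζ volume 0 T)
    (hν : IntervalIntegrable ν volume 0 T)
    (hζ2 : IntervalIntegrable (fun t => (ζ t) ^ 2) volume 0 T)
    (hν2 : IntervalIntegrable (fun t => (ν t) ^ 2) volume 0 T)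
    (hdiff : 0 < volume {t ∈ Set.Ioc 0 T | ζ t ≠ ν t})
    (ρ : ℝ) (hρ : ρ ∈ Set.Ioo (0:ℝ) 1) :
    ρ * H ζ + (1 - ρ) * H ν < H (fun t => ρ * ζ t + (1 - ρ) * ν t) := by
  obtain ⟨hρ0, hρ1⟩ := hρ
  have hρ1' : 0 < 1 - ρ := by linarith
  set m : ℝ → ℝ := fun t => ρ * ζ t + (1 - ρ) * ν t with hm_def
  set δ : ℝ → ℝ := fun t => ζ t - ν t with hδ_def
  -- integrability facts
  have hδ : IntervalIntegrable δ volume 0 T := hζ.sub hν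
  have hζν : IntervalIntegrable (fun t => ζ t * ν t) volume 0 T := mulII hζ hν hζ2 hν2
  have hδ2 : IntervalIntegrable (fun t => δ t ^ 2) volume 0 T := by
    have heq : (fun t => δ t ^ 2)
        = fun t => ζ t ^ 2 - 2 * (ζ t * ν t) + ν t ^ 2 := by
      funext t; simp only [hδ_def]; ring
    rw [heq]
    exact (hζ2.sub (hζν.const_mul 2)).add hν2
  have hm : IntervalIntegrable m volume 0 T := (hζ.const_mul ρ).add (hν.const_mul (1 - ρ))
  have hm2 : IntervalIntegrable (fun t => m t ^ 2) volume 0 T := by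
    have heq : (fun t => m t ^ 2)
        = fun t => ρ ^ 2 * ζ t ^ 2 + (2 * (ρ * (1 - ρ))) * (ζ t * ν t)
            + (1 - ρ) ^ 2 * ν t ^ 2 := by
      funext t; simp only [hm_def]; ring
    rw [heq]
    exact ((hζ2.const_mul _).add (hζν.const_mul _)).add (hν2.const_mul _)
  -- integrand integrability
  have hAζ := integrandII (η := η) (a := a) (φ := φ) hf hζ hζ2
  have hAν := integrandII (η := η) (a := a) (φ := φ) hf hν hν2
  have hAm := integrandII (η := η) (a := a) (φ := φ) hf hm hm2
  have hQδc : ContinuousOn (fun t => ∫ u in (0:ℝ)..t, δ u) (Set.uIcc 0 T) :=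
    continuousOn_primitive_interval' hδ Set.left_mem_uIcc
  have hC : IntervalIntegrable (fun t => η * δ t ^ 2
      + 2 * a * (∫ u in (0:ℝ)..t, δ u) * δ t
      + φ * (∫ u in (0:ℝ)..t, δ u) ^ 2) volume 0 T := by
    have h3 : IntervalIntegrable (fun t => 2 * a * (∫ u in (0:ℝ)..t, δ u) * δ t) volume 0 T := by
      have := (hδ.continuousOn_mul hQδc).const_mul (2 * a)
      simpa [mul_assoc] using this
    have h4 : IntervalIntegrable (fun t => φ * (∫ u in (0:ℝ)..t, δ u) ^ 2) volume 0 T :=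
      (continuousOn_const.mul (hQδc.pow 2)).intervalIntegrable
    exact ((hδ2.const_mul η).add h3).add h4
  -- pointwise identity on [[0, T]]
  have key : Set.EqOn
      (fun t => (∫ u in (0:ℝ)..t, m u) * f t - η * (m t) ^ 2
        - 2 * a * (∫ u in (0:ℝ)..t, m u) * m t - φ * (∫ u in (0:ℝ)..t, m u) ^ 2)
      (fun t => ρ * ((∫ u in (0:ℝ)..t, ζ u) * f t - η * (ζ t) ^ 2
          - 2 * a * (∫ u in (0:ℝ)..t, ζ u) * ζ t - φ * (∫ u in (0:ℝ)..t, ζ u) ^ 2)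
        + (1 - ρ) * ((∫ u in (0:ℝ)..t, ν u) * f t - η * (ν t) ^ 2
          - 2 * a * (∫ u in (0:ℝ)..t, ν u) * ν t - φ * (∫ u in (0:ℝ)..t, ν u) ^ 2)
        + (ρ * (1 - ρ)) * (η * δ t ^ 2
          + 2 * a * (∫ u in (0:ℝ)..t, δ u) * δ t
          + φ * (∫ u in (0:ℝ)..t, δ u) ^ 2))
      (Set.uIcc 0 T) := by
    intro t ht
    have hsub : Set.uIcc (0:ℝ) t ⊆ Set.uIcc (0:ℝ) T :=
      Set.uIcc_subset_uIcc Set.left_mem_uIcc ht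
    have hζt : IntervalIntegrable ζ volume 0 t := hζ.mono_set hsub
    have hνt : IntervalIntegrable ν volume 0 t := hν.mono_set hsub
    have hQm : (∫ u in (0:ℝ)..t, m u)
        = ρ * (∫ u in (0:ℝ)..t, ζ u) + (1 - ρ) * (∫ u in (0:ℝ)..t, ν u) := by
      simp only [hm_def]
      rw [intervalIntegral.integral_add (hζt.const_mul ρ) (hνt.const_mul (1 - ρ)),
        intervalIntegral.integral_const_mul, intervalIntegral.integral_const_mul]
    have hQδ : (∫ u in (0:ℝ)..t, δ u)
        = (∫ u in (0:ℝ)..t, ζ u) - (∫ u in (0:ℝ)..t, ν u) := by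
      simp only [hδ_def]
      rw [intervalIntegral.integral_sub hζt hνt]
    simp only [hQm, hQδ]
    simp only [hm_def, hδ_def]
    ring
  -- split the integral
  have hHm : H m = ρ * H ζ + (1 - ρ) * H ν
      + (ρ * (1 - ρ)) * ∫ t in (0:ℝ)..T, (η * δ t ^ 2
          + 2 * a * (∫ u in (0:ℝ)..t, δ u) * δ t
          + φ * (∫ u in (0:ℝ)..t, δ u) ^ 2) := by
    rw [hH m, hH ζ, hH ν, intervalIntegral.integral_congr key,
      intervalIntegral.integral_add ((hAζ.const_mul ρ).add (hAν.const_mul (1 - ρ)))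
        (hC.const_mul _),
      intervalIntegral.integral_add (hAζ.const_mul ρ) (hAν.const_mul (1 - ρ)),
      intervalIntegral.integral_const_mul, intervalIntegral.integral_const_mul,
      intervalIntegral.integral_const_mul]
  -- positivity of the correction term
  have hδ2pos : 0 < ∫ t in (0:ℝ)..T, δ t ^ 2 := by
    rw [intervalIntegral.integral_of_le hT.le]
    rw [setIntegral_pos_iff_support_of_nonneg_ae
      (ae_of_all _ fun t => sq_nonneg (δ t))
      ((intervalIntegrable_iff_integrableOn_Ioc_of_le hT.le).mp hδ2)]
    refine lt_of_lt_of_le hdiff (measure_mono ?_)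
    intro t ht
    obtain ⟨ht1, ht2⟩ := ht
    refine ⟨?_, ht1⟩
    simp only [Function.mem_support, hδ_def]
    intro h
    exact ht2 (sub_eq_zero.mp (pow_eq_zero_iff two_ne_zero |>.mp h))
  have hQδint : (∫ t in (0:ℝ)..T, (∫ u in (0:ℝ)..t, δ u) * δ t)
      = (∫ u in (0:ℝ)..T, δ u) ^ 2 / 2 := selfconv hT.le hδ
  have hQδ2nn : 0 ≤ ∫ t in (0:ℝ)..T, (∫ u in (0:ℝ)..t, δ u) ^ 2 :=
    intervalIntegral.integral_nonneg hT.le fun t _ => sq_nonneg _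
  have hCsplit : (∫ t in (0:ℝ)..T, (η * δ t ^ 2
        + 2 * a * (∫ u in (0:ℝ)..t, δ u) * δ t
        + φ * (∫ u in (0:ℝ)..t, δ u) ^ 2))
      = η * (∫ t in (0:ℝ)..T, δ t ^ 2)
        + 2 * a * ((∫ u in (0:ℝ)..T, δ u) ^ 2 / 2)
        + φ * (∫ t in (0:ℝ)..T, (∫ u in (0:ℝ)..t, δ u) ^ 2) := by
    have h3 : IntervalIntegrable (fun t => 2 * a * (∫ u in (0:ℝ)..t, δ u) * δ t) volume 0 T := by
      have := (hδ.continuousOn_mul hQδc).const_mul (2 * a)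
      simpa [mul_assoc] using this
    have h4 : IntervalIntegrable (fun t => φ * (∫ u in (0:ℝ)..t, δ u) ^ 2) volume 0 T :=
      (continuousOn_const.mul (hQδc.pow 2)).intervalIntegrable
    rw [intervalIntegral.integral_add ((hδ2.const_mul η).add h3) h4,
      intervalIntegral.integral_add (hδ2.const_mul η) h3,
      intervalIntegral.integral_const_mul, intervalIntegral.integral_const_mul, ← hQδint]
    have : (fun t => 2 * a * (∫ u in (0:ℝ)..t, δ u) * δ t)
        = fun t => 2 * a * ((∫ u in (0:ℝ)..t, δ u) * δ t) := by funext t; ring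
    rw [this, intervalIntegral.integral_const_mul]
  have hCpos : 0 < ∫ t in (0:ℝ)..T, (η * δ t ^ 2
      + 2 * a * (∫ u in (0:ℝ)..t, δ u) * δ t
      + φ * (∫ u in (0:ℝ)..t, δ u) ^ 2) := by
    rw [hCsplit]
    have h1 : 0 < η * (∫ t in (0:ℝ)..T, δ t ^ 2) := mul_pos hη hδ2pos
    have h2 : 0 ≤ 2 * a * ((∫ u in (0:ℝ)..T, δ u) ^ 2 / 2) := by positivity
    have h3 : 0 ≤ φ * (∫ t in (0:ℝ)..T, (∫ u in (0:ℝ)..t, δ u) ^ 2) :=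
      mul_nonneg hφ.le hQδ2nn
    linarith
  have : 0 < (ρ * (1 - ρ)) * ∫ t in (0:ℝ)..T, (η * δ t ^ 2
      + 2 * a * (∫ u in (0:ℝ)..t, δ u) * δ t
      + φ * (∫ u in (0:ℝ)..t, δ u) ^ 2) := mul_pos (mul_pos hρ0 hρ1') hCpos
  rw [show H (fun t => ρ * ζ t + (1 - ρ) * ν t) = H m from rfl, hHm]
  linarith
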